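/- The kernel obtained from S²_{4/1} with a₀₁ = -1, a₀₂ = -4, namely K(t) = (1 - |t|)(1 + |t| - 3t²) for 0 ≤ |t| < 1, K(t) = (2 - |t|)(1 - |t|)² for 1 ≤ |t| < 2, K(t) = 0 for |t| ≥ 2, has approximation order 2: Σ_{i∈ℤ} K(t - i) = 1 and Σ_{i∈ℤ} (t - i)K(t - i) = 0 for all real t. -/
import Mathlib


noncomputable def K (t : ℝ) : ℝ :=
  if |t| < 1 then (1 - |t|) * (1 + |t| - 3 * t ^ 2)
  else if |t| < 2 then (2 - |t|) * (1 - |t|) ^ 2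
  else 0

lemma K_zero_far {x : ℝ} (hx : 2 ≤ |x|) : K x = 0 := by
  unfold K
  rw [if_neg (by linarith), if_neg (by linarith)]

lemma tsum_four (t : ℝ) (f : ℤ → ℝ) (hf : ∀ i : ℤ, 2 ≤ |t - i| → f i = 0) :
    ∑' i : ℤ, f i = f (⌊t⌋ - 1) + f ⌊t⌋ + f (⌊t⌋ + 1) + f (⌊t⌋ + 2) := by
  have hfl : (⌊t⌋ : ℝ) ≤ t := Int.floor_le t
  have hfu : t < ⌊t⌋ + 1 := Int.lt_floor_add_one t
  rw [tsum_eq_sum (s := ({⌊t⌋ - 1, ⌊t⌋, ⌊t⌋ + 1, ⌊t⌋ + 2} : Finset ℤ))]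
  · rw [show ({⌊t⌋ - 1, ⌊t⌋, ⌊t⌋ + 1, ⌊t⌋ + 2} : Finset ℤ)
        = insert (⌊t⌋ - 1) (insert ⌊t⌋ (insert (⌊t⌋ + 1) {⌊t⌋ + 2})) from rfl]
    rw [Finset.sum_insert (by simp only [Finset.mem_insert, Finset.mem_singleton]; omega), Finset.sum_insert (by simp only [Finset.mem_insert, Finset.mem_singleton]; omega),
      Finset.sum_insert (by simp only [Finset.mem_insert, Finset.mem_singleton]; omega), Finset.sum_singleton]
    ring
  · intro i hi
    simp only [Finset.mem_insert, Finset.mem_singleton] at hi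
    push_neg at hi
    apply hf
    have h : i ≤ ⌊t⌋ - 2 ∨ ⌊t⌋ + 3 ≤ i := by omega
    rcases h with h | h
    · have : (i : ℝ) ≤ (⌊t⌋ : ℝ) - 2 := by
        have := (@Int.cast_le ℝ _ _ _).mpr h; push_cast at this; linarith
      rw [abs_of_nonneg (by linarith)]; linarith
    · have : (⌊t⌋ : ℝ) + 3 ≤ (i : ℝ) := by
        have := (@Int.cast_le ℝ _ _ _).mpr h; push_cast at this; linarith
      rw [abs_of_nonpos (by linarith)]; linarith

lemma K_vals {s : ℝ} (h0 : 0 ≤ s) (h1 : s < 1) :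
    K (s + 1) = (1 - s) * s ^ 2 ∧ K s = (1 - s) * (1 + s - 3 * s ^ 2) ∧
    K (s - 1) = s * (2 - s - 3 * (s - 1) ^ 2) ∧ K (s - 2) = s * (s - 1) ^ 2 := by
  rcases eq_or_lt_of_le h0 with rfl | hs
  · norm_num [K]
  · refine ⟨?_, ?_, ?_, ?_⟩ <;> unfold K
    · rw [abs_of_nonneg (by linarith), if_neg (by linarith), if_pos (by linarith)]
      ring
    · rw [abs_of_nonneg h0, if_pos h1]
    · rw [abs_of_nonpos (by linarith), if_pos (by linarith)]
      ring_nf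
    · rw [abs_of_nonpos (by linarith), if_neg (by linarith), if_pos (by linarith)]
      ring

theorem K_approx_order_two :
    (∀ t : ℝ, ∑' i : ℤ, K (t - i) = 1) ∧
    (∀ t : ℝ, ∑' i : ℤ, (t - i) * K (t - i) = 0) := by
  have key : ∀ t : ℝ,
      ∃ s : ℝ, 0 ≤ s ∧ s < 1 ∧
        t - ((⌊t⌋ : ℤ) - 1 : ℤ) = s + 1 ∧ t - (⌊t⌋ : ℤ) = s ∧
        t - ((⌊t⌋ : ℤ) + 1 : ℤ) = s - 1 ∧ t - ((⌊t⌋ : ℤ) + 2 : ℤ) = s - 2 := by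
    intro t
    refine ⟨t - ⌊t⌋, by linarith [Int.floor_le t], by linarith [Int.lt_floor_add_one t],
      ?_, ?_, ?_, ?_⟩ <;> push_cast <;> ring
  constructor
  · intro t
    obtain ⟨s, h0, h1, e1, e2, e3, e4⟩ := key t
    rw [tsum_four t _ (fun i hi => K_zero_far hi), e1, e2, e3, e4]
    obtain ⟨v1, v2, v3, v4⟩ := K_vals h0 h1
    rw [v1, v2, v3, v4]; ring
  · intro t
    obtain ⟨s, h0, h1, e1, e2, e3, e4⟩ := key t
    rw [tsum_four t _ (fun i hi => by rw [K_zero_far hi, mul_zero]), e1, e2, e3, e4]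
    obtain ⟨v1, v2, v3, v4⟩ := K_vals h0 h1
    rw [v1, v2, v3, v4]; ring
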